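/- Let n ≥ 2, p > 0, K ∈ K_o^n, and let f : S^{n-1} → (0,∞) be continuous. Then there exist δ > 0 and M > 0 such that, with h_t(v) = (h_K(v)^p + t f(v)^p)^{1/p}, the inequality |ρ_{[h_t]}(u) − ρ_K(u)| ≤ M|t| holds for all u ∈ S^{n-1} and all t ∈ (−δ, δ). -/

import Mathlib

open MeasureTheory Metric Set Filter
open scoped RealInnerProductSpace ENNReal Pointwise Topology

/-- The support function of a set `K`. -/
noncomputable def supportFn {n : ℕ} (K : Set (EuclideanSpace ℝ (Fin n)))
    (v : EuclideanSpace ℝ (Fin n)) : ℝ :=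
  sSup ((fun y => ⟪y, v⟫) '' K)

/-- The radial function of a set `K` at `u`. -/
noncomputable def radialFn {n : ℕ} (K : Set (EuclideanSpace ℝ (Fin n)))
    (u : EuclideanSpace ℝ (Fin n)) : ℝ :=
  sSup {l : ℝ | 0 ≤ l ∧ l • u ∈ K}

/-- The Wulff shape `[f] = ⋂_{v ∈ Sⁿ⁻¹} {x : ⟨x,v⟩ ≤ f v}`. -/
def wulff (n : ℕ) (f : EuclideanSpace ℝ (Fin n) → ℝ) : Set (EuclideanSpace ℝ (Fin n)) :=
  ⋂ v ∈ sphere (0 : EuclideanSpace ℝ (Fin n)) 1, {x | ⟪x, v⟫ ≤ f v}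

lemma inner_le_supportFn {n : ℕ} {K : Set (EuclideanSpace ℝ (Fin n))} (hK : IsCompact K)
    {y : EuclideanSpace ℝ (Fin n)} (hy : y ∈ K) (v : EuclideanSpace ℝ (Fin n)) :
    ⟪y, v⟫ ≤ supportFn K v :=
  le_csSup ((hK.image (continuous_id.inner continuous_const)).bddAbove) ⟨y, hy, rfl⟩

lemma supportFn_le {n : ℕ} {K : Set (EuclideanSpace ℝ (Fin n))} (hne : K.Nonempty)
    {v : EuclideanSpace ℝ (Fin n)} {c : ℝ} (h : ∀ y ∈ K, ⟪y, v⟫ ≤ c) :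
    supportFn K v ≤ c :=
  csSup_le (hne.image _) (by rintro _ ⟨y, hy, rfl⟩; exact h y hy)

lemma smul_subset_wulff {n : ℕ} {K : Set (EuclideanSpace ℝ (Fin n))} (hK : IsCompact K)
    {a : ℝ} (ha : 0 ≤ a) {g : EuclideanSpace ℝ (Fin n) → ℝ}
    (hg : ∀ v ∈ sphere (0 : EuclideanSpace ℝ (Fin n)) 1, a * supportFn K v ≤ g v) :
    a • K ⊆ wulff n g := by
  rintro _ ⟨y, hy, rfl⟩
  refine Set.mem_iInter₂.2 fun v hv => ?_
  have h1 : ⟪y, v⟫ ≤ supportFn K v := inner_le_supportFn hK hy v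
  have : ⟪a • y, v⟫ = a * ⟪y, v⟫ := real_inner_smul_left y v a
  simp only [Set.mem_setOf_eq, this]
  exact le_trans (mul_le_mul_of_nonneg_left h1 ha) (hg v hv)

lemma wulff_subset_smul {n : ℕ} {K : Set (EuclideanSpace ℝ (Fin n))} (hK : IsCompact K)
    (hKconv : Convex ℝ K) (hK0 : (0 : EuclideanSpace ℝ (Fin n)) ∈ K) {a : ℝ} (ha : 0 < a)
    {g : EuclideanSpace ℝ (Fin n) → ℝ}
    (hg : ∀ v ∈ sphere (0 : EuclideanSpace ℝ (Fin n)) 1, g v ≤ a * supportFn K v) :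
    wulff n g ⊆ a • K := by
  intro x hx
  by_contra hxn
  obtain ⟨φ, u, hφ, hux⟩ := geometric_hahn_banach_closed_point
    (hKconv.smul a) (hK.smul a).isClosed hxn
  set v := (InnerProductSpace.toDual ℝ (EuclideanSpace ℝ (Fin n))).symm φ with hv
  have hφv : ∀ z, φ z = ⟪v, z⟫ := fun z => (InnerProductSpace.toDual_symm_apply).symm
  have hu0 : 0 < u := by
    have := hφ 0 ⟨0, hK0, smul_zero a⟩
    simpa using this
  have hv0 : v ≠ 0 := by
    intro h
    have := hφv x
    rw [h] at this
    simp at this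
    linarith
  have hvn : 0 < ‖v‖ := norm_pos_iff.2 hv0
  set w : EuclideanSpace ℝ (Fin n) := ‖v‖⁻¹ • v with hw
  have hws : w ∈ sphere (0 : EuclideanSpace ℝ (Fin n)) 1 := by
    simp [hw, norm_smul, abs_of_nonneg (le_of_lt (inv_pos.2 hvn)),
      inv_mul_cancel₀ (ne_of_gt hvn)]
  have hKs : supportFn K w ≤ u / (a * ‖v‖) := by
    refine supportFn_le ⟨0, hK0⟩ fun y hy => ?_
    have h2 : φ (a • y) < u := hφ _ ⟨y, hy, rfl⟩
    rw [hφv] at h2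
    rw [real_inner_smul_right] at h2
    have h3 : ⟪y, w⟫ = ‖v‖⁻¹ * ⟪v, y⟫ := by
      rw [hw, real_inner_smul_right, real_inner_comm]
    rw [h3]
    rw [div_eq_mul_inv, mul_comm a ‖v‖, mul_inv]
    have h4 : ⟪v, y⟫ ≤ u / a := by
      rw [le_div_iff₀ ha]; linarith [h2]
    calc ‖v‖⁻¹ * ⟪v, y⟫ ≤ ‖v‖⁻¹ * (u / a) :=
          mul_le_mul_of_nonneg_left h4 (le_of_lt (inv_pos.2 hvn))
      _ = u * (‖v‖⁻¹ * a⁻¹) := by ring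
  have hxw : ⟪x, w⟫ ≤ g w := by
    have := Set.mem_iInter₂.1 hx w hws
    exact this
  have hgw : g w ≤ a * supportFn K w := hg w hws
  have hxv : u < ⟪v, x⟫ := by rw [← hφv]; exact hux
  have hxw2 : ⟪x, w⟫ = ‖v‖⁻¹ * ⟪v, x⟫ := by
    rw [hw, real_inner_smul_right, real_inner_comm]
  have : a * supportFn K w ≤ a * (u / (a * ‖v‖)) := mul_le_mul_of_nonneg_left hKs (le_of_lt ha)
  have hfin : ⟪x, w⟫ ≤ u / ‖v‖ := by
    calc ⟪x, w⟫ ≤ a * (u / (a * ‖v‖)) := le_trans hxw (le_trans hgw this)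
      _ = u / ‖v‖ := by field_simp
  rw [hxw2] at hfin
  have : ⟪v, x⟫ ≤ u := by
    rw [div_eq_inv_mul] at hfin
    exact le_of_mul_le_mul_left (by linarith [hfin]) (inv_pos.2 hvn) |>.trans (le_refl u)
  linarith

lemma radialFn_mono {n : ℕ} {A B : Set (EuclideanSpace ℝ (Fin n))}
    (hAB : A ⊆ B) (h0 : (0 : EuclideanSpace ℝ (Fin n)) ∈ A) {R : ℝ}
    (hB : B ⊆ closedBall (0 : EuclideanSpace ℝ (Fin n)) R)
    {u : EuclideanSpace ℝ (Fin n)} (hu : ‖u‖ = 1) :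
    radialFn A u ≤ radialFn B u := by
  have hbdd : BddAbove {l : ℝ | 0 ≤ l ∧ l • u ∈ B} := by
    refine ⟨R, fun l hl => ?_⟩
    have := hB hl.2
    rw [mem_closedBall_zero_iff, norm_smul, hu, mul_one, Real.norm_eq_abs,
      abs_of_nonneg hl.1] at this
    exact this
  exact csSup_le_csSup hbdd ⟨0, le_refl 0, by simpa using h0⟩
    (fun l hl => ⟨hl.1, hAB hl.2⟩)

lemma radialFn_nonneg {n : ℕ} {A : Set (EuclideanSpace ℝ (Fin n))}
    (h0 : (0 : EuclideanSpace ℝ (Fin n)) ∈ A) {R : ℝ}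
    (hA : A ⊆ closedBall (0 : EuclideanSpace ℝ (Fin n)) R)
    {u : EuclideanSpace ℝ (Fin n)} (hu : ‖u‖ = 1) :
    0 ≤ radialFn A u := by
  refine le_csSup ⟨R, fun l hl => ?_⟩ ⟨le_refl 0, by simpa using h0⟩
  have := hA hl.2
  rw [mem_closedBall_zero_iff, norm_smul, hu, mul_one, Real.norm_eq_abs,
    abs_of_nonneg hl.1] at this
  exact this

lemma radialFn_le {n : ℕ} {A : Set (EuclideanSpace ℝ (Fin n))}
    (h0 : (0 : EuclideanSpace ℝ (Fin n)) ∈ A) {R : ℝ}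
    (hA : A ⊆ closedBall (0 : EuclideanSpace ℝ (Fin n)) R)
    {u : EuclideanSpace ℝ (Fin n)} (hu : ‖u‖ = 1) :
    radialFn A u ≤ R := by
  refine csSup_le ⟨0, le_refl 0, by simpa using h0⟩ fun l hl => ?_
  have := hA hl.2
  rw [mem_closedBall_zero_iff, norm_smul, hu, mul_one, Real.norm_eq_abs,
    abs_of_nonneg hl.1] at this
  exact this

lemma radialFn_smul {n : ℕ} {A : Set (EuclideanSpace ℝ (Fin n))}
    (h0 : (0 : EuclideanSpace ℝ (Fin n)) ∈ A) {R : ℝ}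
    (hA : A ⊆ closedBall (0 : EuclideanSpace ℝ (Fin n)) R)
    {u : EuclideanSpace ℝ (Fin n)} (hu : ‖u‖ = 1) {a : ℝ} (ha : 0 < a) :
    radialFn (a • A) u = a * radialFn A u := by
  have hbddA : BddAbove {l : ℝ | 0 ≤ l ∧ l • u ∈ A} := by
    refine ⟨R, fun l hl => ?_⟩
    have := hA hl.2
    rw [mem_closedBall_zero_iff, norm_smul, hu, mul_one, Real.norm_eq_abs,
      abs_of_nonneg hl.1] at this
    exact this
  have hbddaA : BddAbove {l : ℝ | 0 ≤ l ∧ l • u ∈ a • A} := by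
    refine ⟨a * R, fun l hl => ?_⟩
    obtain ⟨y, hy, hyl⟩ := hl.2
    have hyl' : a • y = l • u := hyl
    have hyR := hA hy
    rw [mem_closedBall_zero_iff] at hyR
    have : ‖l • u‖ = ‖a • y‖ := congrArg norm hyl'.symm
    rw [norm_smul, hu, mul_one, Real.norm_eq_abs, abs_of_nonneg hl.1,
      norm_smul, Real.norm_eq_abs, abs_of_nonneg ha.le] at this
    calc l = a * ‖y‖ := this
      _ ≤ a * R := by nlinarith
  apply le_antisymm
  · refine csSup_le ⟨0, le_refl 0, by simpa using ⟨0, h0, smul_zero a⟩⟩ fun l hl => ?_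
    obtain ⟨hl0, y, hy, hyl⟩ := hl
    have hmem : (l / a) ∈ {l : ℝ | 0 ≤ l ∧ l • u ∈ A} := by
      constructor
      · positivity
      · have hyl' : a • y = l • u := hyl
        have h5 : y = (a⁻¹ * l) • u := by
          have := congrArg (fun z : EuclideanSpace ℝ (Fin n) => a⁻¹ • z) hyl'
          simpa [smul_smul, inv_mul_cancel₀ ha.ne'] using this
        have h6 : (l / a) • u = y := by rw [h5, div_eq_inv_mul]
        rw [h6]; exact hy
    have := le_csSup hbddA hmem
    calc l = a * (l / a) := by field_simp
      _ ≤ a * radialFn A u := by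
        exact mul_le_mul_of_nonneg_left this ha.le
  · rw [← le_div_iff₀' ha]
    refine csSup_le ⟨0, le_refl 0, by simpa using h0⟩ fun m hm => ?_
    have hmem : a * m ∈ {l : ℝ | 0 ≤ l ∧ l • u ∈ a • A} := by
      refine ⟨mul_nonneg ha.le hm.1, ⟨m • u, hm.2, ?_⟩⟩
      show a • (m • u) = (a * m) • u
      rw [smul_smul]
    have := le_csSup hbddaA hmem
    rw [le_div_iff₀' ha]
    exact this

lemma rpow_lipschitz (p : ℝ) (hp : 0 < p) :
    ∃ M > (0:ℝ), ∀ s : ℝ, |s| ≤ 1/2 → |(1+s) ^ (1/p) - 1| ≤ M * |s| := by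
  set q := 1/p with hqdef
  have hq : 0 < q := by positivity
  refine ⟨q * ((1/2:ℝ) ^ (q-1) + 2 ^ (q-1)), by positivity, fun s hs => ?_⟩
  have hsm : s ∈ Icc (-(1/2):ℝ) (1/2) := by
    rw [abs_le] at hs; exact ⟨by linarith [hs.1], hs.2⟩
  have h1 : ∀ x ∈ Icc (-(1/2):ℝ) (1/2), HasDerivWithinAt (fun s : ℝ => (1+s) ^ q)
      (q * (1+x) ^ (q-1)) (Icc (-(1/2):ℝ) (1/2)) x := by
    intro x hx
    have hx1 : (0:ℝ) < 1 + x := by linarith [hx.1]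
    have hd1 := Real.hasDerivAt_rpow_const (x := 1+x) (p := q) (Or.inl (ne_of_gt hx1))
    have hd2 : HasDerivAt (fun s : ℝ => 1 + s) 1 x := by
      simpa using (hasDerivAt_id x).const_add (1:ℝ)
    have := hd1.comp x hd2
    have h' := this.hasDerivWithinAt (s := Icc (-(1/2):ℝ) (1/2))
    rw [mul_one] at h'
    exact h'
  have bound : ∀ x ∈ Icc (-(1/2):ℝ) (1/2),
      ‖q * (1+x) ^ (q-1)‖ ≤ q * ((1/2:ℝ) ^ (q-1) + 2 ^ (q-1)) := by
    intro x hx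
    have hx1 : (1/2:ℝ) ≤ 1 + x := by linarith [hx.1]
    have hx2 : 1 + x ≤ 2 := by linarith [hx.2]
    have hx0 : (0:ℝ) < 1 + x := by linarith
    rw [Real.norm_eq_abs, abs_of_nonneg (by positivity)]
    rcases le_or_gt 0 (q-1) with h | h
    · have h1 : (1+x) ^ (q-1) ≤ 2 ^ (q-1) := Real.rpow_le_rpow hx0.le hx2 h
      have h0 : (0:ℝ) ≤ (1/2:ℝ) ^ (q-1) := by positivity
      nlinarith
    · have h1 : (1+x) ^ (q-1) ≤ (1/2:ℝ) ^ (q-1) :=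
        Real.rpow_le_rpow_of_nonpos (by norm_num) hx1 h.le
      have h0 : (0:ℝ) ≤ (2:ℝ) ^ (q-1) := by positivity
      nlinarith
  have := Convex.norm_image_sub_le_of_norm_hasDerivWithin_le h1 bound
    (convex_Icc _ _) (by constructor <;> norm_num : (0:ℝ) ∈ Icc (-(1/2):ℝ) (1/2)) hsm
  simpa [Real.norm_eq_abs] using this

theorem radialFn_wulff_lipschitz_in_t (n : ℕ) (hn : 2 ≤ n) (p : ℝ) (hp : 0 < p)
    (K : Set (EuclideanSpace ℝ (Fin n)))
    (hK : IsCompact K) (hKconv : Convex ℝ K) (hKo : (0 : EuclideanSpace ℝ (Fin n)) ∈ interior K)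
    (f : EuclideanSpace ℝ (Fin n) → ℝ)
    (hf : ContinuousOn f (sphere (0 : EuclideanSpace ℝ (Fin n)) 1))
    (hfpos : ∀ v ∈ sphere (0 : EuclideanSpace ℝ (Fin n)) 1, 0 < f v) :
    ∃ δ > (0 : ℝ), ∃ M > (0 : ℝ),
      ∀ u ∈ sphere (0 : EuclideanSpace ℝ (Fin n)) 1, ∀ t ∈ Set.Ioo (-δ) δ,
        |radialFn (wulff n (fun v => (supportFn K v ^ p + t * f v ^ p) ^ (1 / p))) u
          - radialFn K u| ≤ M * |t| := by
  obtain ⟨M₀, hM₀, hlip⟩ := rpow_lipschitz p hp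
  obtain ⟨ε0, hε0, hball⟩ := Metric.mem_nhds_iff.1 (mem_interior_iff_mem_nhds.1 hKo)
  set ε := ε0 / 2 with hεdef
  have hεpos : 0 < ε := by positivity
  have hεK : closedBall (0 : EuclideanSpace ℝ (Fin n)) ε ⊆ K :=
    (closedBall_subset_ball (by rw [hεdef]; linarith)).trans hball
  have hK0 : (0 : EuclideanSpace ℝ (Fin n)) ∈ K := hεK (mem_closedBall_self hεpos.le)
  obtain ⟨R0, hR0⟩ := hK.isBounded.subset_closedBall 0
  set R := max R0 ε with hRdef
  have hR : K ⊆ closedBall (0 : EuclideanSpace ℝ (Fin n)) R :=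
    hR0.trans (closedBall_subset_closedBall (le_max_left _ _))
  have hRpos : 0 < R := lt_of_lt_of_le hεpos (le_max_right _ _)
  have hbddf := ((isCompact_sphere (0 : EuclideanSpace ℝ (Fin n)) 1).image_of_continuousOn
    hf).bddAbove
  set C := max 1 (sSup (f '' sphere (0 : EuclideanSpace ℝ (Fin n)) 1)) with hCdef
  have hCpos : (0:ℝ) < C := lt_of_lt_of_le one_pos (le_max_left _ _)
  have hCf : ∀ v ∈ sphere (0 : EuclideanSpace ℝ (Fin n)) 1, f v ≤ C := fun v hv =>
    (le_csSup hbddf ⟨v, hv, rfl⟩).trans (le_max_right _ _)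
  have hsl : ∀ v ∈ sphere (0 : EuclideanSpace ℝ (Fin n)) 1, ε ≤ supportFn K v := by
    intro v hv
    have hv1 : ‖v‖ = 1 := mem_sphere_zero_iff_norm.1 hv
    have hmem : ε • v ∈ K := hεK (by
      rw [mem_closedBall_zero_iff, norm_smul, hv1, mul_one, Real.norm_eq_abs,
        abs_of_nonneg hεpos.le])
    have := inner_le_supportFn hK hmem v
    rwa [real_inner_smul_left, real_inner_self_eq_norm_sq, hv1, one_pow, mul_one] at this
  have hsu : ∀ v ∈ sphere (0 : EuclideanSpace ℝ (Fin n)) 1, supportFn K v ≤ R := by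
    intro v hv
    have hv1 : ‖v‖ = 1 := mem_sphere_zero_iff_norm.1 hv
    refine supportFn_le ⟨0, hK0⟩ fun y hy => ?_
    have h1 : ‖y‖ ≤ R := mem_closedBall_zero_iff.1 (hR hy)
    calc ⟪y, v⟫ ≤ ‖y‖ * ‖v‖ := real_inner_le_norm y v
      _ = ‖y‖ := by rw [hv1, mul_one]
      _ ≤ R := h1
  have hεp : (0:ℝ) < ε ^ p := Real.rpow_pos_of_pos hεpos p
  have hCp : (0:ℝ) < C ^ p := Real.rpow_pos_of_pos hCpos p
  set M₁ := M₀ * C ^ p / ε ^ p with hM₁def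
  have hM₁pos : 0 < M₁ := by positivity
  set δ := min (ε ^ p / (2 * C ^ p)) (1 / (2 * M₁)) with hδdef
  have hδpos : 0 < δ := lt_min (by positivity) (by positivity)
  refine ⟨δ, hδpos, M₁ * R, by positivity, ?_⟩
  intro u hu t ht
  have hu1 : ‖u‖ = 1 := mem_sphere_zero_iff_norm.1 hu
  have habs : |t| ≤ δ := le_of_lt (abs_lt.2 ⟨ht.1, ht.2⟩)
  have hMt : M₁ * |t| ≤ 1 / 2 := by
    calc M₁ * |t| ≤ M₁ * δ := mul_le_mul_of_nonneg_left habs hM₁pos.le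
      _ ≤ M₁ * (1 / (2 * M₁)) := mul_le_mul_of_nonneg_left (min_le_right _ _) hM₁pos.le
      _ = 1 / 2 := by field_simp
  set g : EuclideanSpace ℝ (Fin n) → ℝ :=
    fun v => (supportFn K v ^ p + t * f v ^ p) ^ (1 / p) with hgdef
  set aP := 1 + M₁ * |t| with haPdef
  set aM := 1 - M₁ * |t| with haMdef
  have ham : (0:ℝ) < aM := by rw [haMdef]; linarith
  have hap : (0:ℝ) < aP := by rw [haPdef]; positivity
  have hap2 : aP ≤ 3 / 2 := by rw [haPdef]; linarith
  have key : ∀ v ∈ sphere (0 : EuclideanSpace ℝ (Fin n)) 1,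
      aM * supportFn K v ≤ g v ∧ g v ≤ aP * supportFn K v := by
    intro v hv
    have hh1 : ε ≤ supportFn K v := hsl v hv
    have hh0 : (0:ℝ) < supportFn K v := lt_of_lt_of_le hεpos hh1
    have hf0 : 0 ≤ f v := (hfpos v hv).le
    have hfpC : f v ^ p ≤ C ^ p := Real.rpow_le_rpow hf0 (hCf v hv) hp.le
    have hfp0 : (0:ℝ) ≤ f v ^ p := Real.rpow_nonneg hf0 p
    have hεph : ε ^ p ≤ supportFn K v ^ p := Real.rpow_le_rpow hεpos.le hh1 hp.le
    have hhp0 : (0:ℝ) < supportFn K v ^ p := Real.rpow_pos_of_pos hh0 p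
    set s := t * f v ^ p / supportFn K v ^ p with hsdef
    have hsabs : |s| ≤ |t| * C ^ p / ε ^ p := by
      rw [hsdef, abs_div, abs_mul, abs_of_nonneg hfp0, abs_of_nonneg hhp0.le]
      exact div_le_div₀ (by positivity) (mul_le_mul_of_nonneg_left hfpC (abs_nonneg t)) hεp hεph
    have hs12 : |s| ≤ 1 / 2 := by
      have h1 : |t| * C ^ p / ε ^ p ≤ δ * C ^ p / ε ^ p := by gcongr
      have h2 : δ * C ^ p / ε ^ p ≤ (ε ^ p / (2 * C ^ p)) * C ^ p / ε ^ p := by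
        gcongr
        exact min_le_left _ _
      have h3 : (ε ^ p / (2 * C ^ p)) * C ^ p / ε ^ p = 1 / 2 := by field_simp
      linarith
    have hs1 : (0:ℝ) ≤ 1 + s := by linarith [(abs_le.1 hs12).1]
    have hdecomp : supportFn K v ^ p + t * f v ^ p = supportFn K v ^ p * (1 + s) := by
      rw [hsdef]; field_simp
    have hgv : g v = supportFn K v * (1 + s) ^ (1 / p) := by
      show (supportFn K v ^ p + t * f v ^ p) ^ (1 / p) = _
      rw [hdecomp, Real.mul_rpow hhp0.le hs1, ← Real.rpow_mul hh0.le, mul_one_div,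
        div_self hp.ne', Real.rpow_one]
    have hA2 : |(1 + s) ^ (1 / p) - 1| ≤ M₁ * |t| := by
      have h4 := hlip s hs12
      have h5 : M₀ * |s| ≤ M₀ * (|t| * C ^ p / ε ^ p) := mul_le_mul_of_nonneg_left hsabs hM₀.le
      have h6 : M₀ * (|t| * C ^ p / ε ^ p) = M₁ * |t| := by rw [hM₁def]; ring
      linarith
    obtain ⟨hA3, hA4⟩ := abs_le.1 hA2
    rw [hgv]
    constructor
    · calc aM * supportFn K v = supportFn K v * (1 - M₁ * |t|) := by rw [haMdef]; ring
        _ ≤ supportFn K v * (1 + s) ^ (1 / p) :=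
          mul_le_mul_of_nonneg_left (by linarith) hh0.le
    · calc supportFn K v * (1 + s) ^ (1 / p) ≤ supportFn K v * (1 + M₁ * |t|) :=
          mul_le_mul_of_nonneg_left (by linarith) hh0.le
        _ = aP * supportFn K v := by rw [haPdef]; ring
  have hW1 : aM • K ⊆ wulff n g := smul_subset_wulff hK ham.le fun v hv => (key v hv).1
  have hW2 : wulff n g ⊆ aP • K := wulff_subset_smul hK hKconv hK0 hap fun v hv => (key v hv).2
  have h0m : (0 : EuclideanSpace ℝ (Fin n)) ∈ aM • K := ⟨0, hK0, smul_zero _⟩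
  have h0W : (0 : EuclideanSpace ℝ (Fin n)) ∈ wulff n g := hW1 h0m
  have haK2 : aP • K ⊆ closedBall (0 : EuclideanSpace ℝ (Fin n)) (2 * R) := by
    rintro _ ⟨y, hy, rfl⟩
    have h1 : ‖y‖ ≤ R := mem_closedBall_zero_iff.1 (hR hy)
    rw [mem_closedBall_zero_iff, norm_smul, Real.norm_eq_abs, abs_of_nonneg hap.le]
    nlinarith
  have hub : radialFn (wulff n g) u ≤ radialFn (aP • K) u :=
    radialFn_mono hW2 h0W haK2 hu1
  have hlb : radialFn (aM • K) u ≤ radialFn (wulff n g) u :=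
    radialFn_mono hW1 h0m (hW2.trans haK2) hu1
  have he1 : radialFn (aP • K) u = aP * radialFn K u := radialFn_smul hK0 hR hu1 hap
  have he2 : radialFn (aM • K) u = aM * radialFn K u := radialFn_smul hK0 hR hu1 ham
  have hρ0 : 0 ≤ radialFn K u := radialFn_nonneg hK0 hR hu1
  have hρR : radialFn K u ≤ R := radialFn_le hK0 hR hu1
  have hprod : M₁ * |t| * radialFn K u ≤ M₁ * |t| * R :=
    mul_le_mul_of_nonneg_left hρR (by positivity)
  have e2' : radialFn (aM • K) u = radialFn K u - M₁ * |t| * radialFn K u := by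
    rw [he2, haMdef]; ring
  have e1' : radialFn (aP • K) u = radialFn K u + M₁ * |t| * radialFn K u := by
    rw [he1, haPdef]; ring
  have eM : M₁ * R * |t| = M₁ * |t| * R := by ring
  rw [abs_le]
  constructor
  · linarith
  · linarith
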